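/- arXiv:2208.14310 — 2 statements merged into one kernel-verified Lean document; each statement's English description precedes it below -/
import Mathlib

section
/- Let ρ be a density matrix on ℂ^{d_A} ⊗ (ℂ^{d_B} ⊗ ℂ^{d_C}) (indexed by triples). Then negativity does not increase when subsystem C is discarded: the negativity of the partial trace tr_C ρ with respect to the bipartition A : B is at most the negativity of ρ with respect to the bipartition A : BC. -/
open scoped Matrix Kronecker ComplexOrder

noncomputable section

/-- Hermitian inner product on `n → ℂ` (conjugate-linear in the first argument). -/
def cinner {n : Type*} [Fintype n] (v w : n → ℂ) : ℂ :=
  ∑ i, (starRingEnd ℂ) (v i) * w i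

/-- Tensor (Kronecker) product of vectors. -/
def tensorVec {α β : Type*} (v : α → ℂ) (w : β → ℂ) : α × β → ℂ :=
  fun p => v p.1 * w p.2

/-- The projector `|v⟩⟨v|`. -/
def vecProj {n : Type*} (v : n → ℂ) : Matrix n n ℂ :=
  Matrix.of fun i j => v i * (starRingEnd ℂ) (v j)

/-- A density matrix: positive semidefinite with unit trace. -/
def IsDensityMatrix {n : Type*} [Fintype n] (ρ : Matrix n n ℂ) : Prop :=
  ρ.PosSemidef ∧ ρ.trace = 1

open Classical in
/-- Positive semidefinite square root (0 on non-PSD input). -/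
def msqrt {n : Type*} [Fintype n] [DecidableEq n] (ρ : Matrix n n ℂ) : Matrix n n ℂ :=
  if h : ρ.PosSemidef then
    (h.1.eigenvectorUnitary : Matrix n n ℂ) * Matrix.diagonal ((↑) ∘ Real.sqrt ∘ h.1.eigenvalues) *
      (star h.1.eigenvectorUnitary : Matrix n n ℂ)
  else 0

/-- Uhlmann root fidelity `F(ρ,σ) = tr √(√ρ σ √ρ)`. -/
def rootFidelity {n : Type*} [Fintype n] [DecidableEq n] (ρ σ : Matrix n n ℂ) : ℝ :=
  ((msqrt (msqrt ρ * σ * msqrt ρ)).trace).re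

/-- Partial trace over the second tensor factor. -/
def ptraceC {α γ : Type*} [Fintype γ] (ρ : Matrix (α × γ) (α × γ) ℂ) : Matrix α α ℂ :=
  Matrix.of fun i j => ∑ k, ρ (i, k) (j, k)

/-- Partial trace over the first tensor factor. -/
def ptraceA {α β : Type*} [Fintype α] (ρ : Matrix (α × β) (α × β) ℂ) : Matrix β β ℂ :=
  Matrix.of fun i j => ∑ k, ρ (k, i) (k, j)

/-- Partial transpose on the second tensor factor. -/
def ptB {α β : Type*} (ρ : Matrix (α × β) (α × β) ℂ) : Matrix (α × β) (α × β) ℂ :=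
  Matrix.of fun p q => ρ (p.1, q.2) (q.1, p.2)

open Classical in
/-- Negativity: the sum of the absolute values of the negative eigenvalues of
the partial transpose (0 if the partial transpose is not Hermitian). -/
def negativity {α β : Type*} [Fintype α] [Fintype β] [DecidableEq α] [DecidableEq β]
    (ρ : Matrix (α × β) (α × β) ℂ) : ℝ :=
  if h : (ptB ρ).IsHermitian then ∑ i, max 0 (- h.eigenvalues i) else 0

/-- A family of vectors is an orthonormal basis family (orthonormal, indexed by the
same finite type as the dimension, hence a basis). -/
def IsONB {n : Type*} [Fintype n] [DecidableEq n] (x : n → n → ℂ) : Prop :=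
  ∀ j k, cinner (x j) (x k) = if j = k then 1 else 0

/-- Separability: a finite convex combination of projectors onto product unit vectors. -/
def IsSeparableDM {α β : Type*} [Fintype α] [Fintype β]
    (ρ : Matrix (α × β) (α × β) ℂ) : Prop :=
  ∃ (m : ℕ) (p : Fin m → ℝ) (a : Fin m → α → ℂ) (b : Fin m → β → ℂ),
    (∀ j, 0 ≤ p j) ∧ (∑ j, p j = 1) ∧
    (∀ j, cinner (a j) (a j) = 1) ∧ (∀ j, cinner (b j) (b j) = 1) ∧
    ρ = ∑ j, (p j : ℂ) • vecProj (tensorVec (a j) (b j))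

/-- A maximally entangled state on `ℂ^d ⊗ ℂ^d`. -/
def IsMaxEnt {d : ℕ} (Ψ : Fin d × Fin d → ℂ) : Prop :=
  ∃ x y : Fin d → Fin d → ℂ, IsONB x ∧ IsONB y ∧
    Ψ = ((Real.sqrt d : ℂ)⁻¹) • ∑ j, tensorVec (x j) (y j)

/-- Partial trace over the third tensor factor of a tripartite system. -/
def ptraceC3 {α β γ : Type*} [Fintype γ] (ρ : Matrix (α × β × γ) (α × β × γ) ℂ) :
    Matrix (α × β) (α × β) ℂ :=
  Matrix.of fun p q => ∑ k, ρ (p.1, p.2, k) (q.1, q.2, k)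

section NegHelpers
open Matrix
set_option linter.unusedSectionVars false


lemma psd_diag_nonneg {n : Type*} [Fintype n] [DecidableEq n] {M : Matrix n n ℂ}
    (hM : M.PosSemidef) (i : n) : 0 ≤ M i i := by
  have := hM.dotProduct_mulVec_nonneg (Pi.single i 1)
  simpa [dotProduct, mulVec, Pi.single_apply] using this

lemma neg_trace_le {n : Type*} [Fintype n] [DecidableEq n]
    {H Q : Matrix n n ℂ} (hH : H.IsHermitian)
    (hQ : Q.PosSemidef) (hQ1 : ((1 : Matrix n n ℂ) - Q).PosSemidef) :
    -((Q * H).trace.re) ≤ ∑ i, max 0 (-(hH.eigenvalues i)) := by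
  set U : Matrix n n ℂ := (hH.eigenvectorUnitary : Matrix n n ℂ) with hUdef
  have hU1 : star U * U = 1 := by
    have := (hH.eigenvectorUnitary).2.1
    exact this
  have htr : (Q * H).trace = ∑ i, (star U * Q * U) i i * ((hH.eigenvalues i : ℝ) : ℂ) := by
    conv_lhs => rw [hH.spectral_theorem, Unitary.conjStarAlgAut_apply]
    rw [show Q * (U * diagonal (RCLike.ofReal ∘ hH.eigenvalues) * star U)
        = (Q * U * diagonal (RCLike.ofReal ∘ hH.eigenvalues)) * star U by simp only [mul_assoc]]
    rw [trace_mul_comm]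
    rw [show star U * (Q * U * diagonal (RCLike.ofReal ∘ hH.eigenvalues))
        = (star U * Q * U) * diagonal (RCLike.ofReal ∘ hH.eigenvalues) by simp only [mul_assoc]]
    rw [trace]
    simp [mul_diagonal, Function.comp]
  have hpsd : (star U * Q * U).PosSemidef := by
    have := hQ.conjTranspose_mul_mul_same U
    simpa [star_eq_conjTranspose] using this
  have hpsd1 : ((1 : Matrix n n ℂ) - star U * Q * U).PosSemidef := by
    have := hQ1.conjTranspose_mul_mul_same U
    have e : Uᴴ * (1 - Q) * U = 1 - star U * Q * U := by
      rw [star_eq_conjTranspose] at hU1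
      rw [mul_sub, sub_mul, mul_one, hU1, star_eq_conjTranspose]
    rwa [e] at this
  have hq0 : ∀ i, 0 ≤ ((star U * Q * U) i i).re := fun i =>
    (Complex.nonneg_iff.mp (psd_diag_nonneg hpsd i)).1
  have hq1 : ∀ i, ((star U * Q * U) i i).re ≤ 1 := by
    intro i
    have := (Complex.nonneg_iff.mp (psd_diag_nonneg hpsd1 i)).1
    simp only [Matrix.sub_apply, one_apply_eq, Complex.sub_re, Complex.one_re] at this
    linarith
  rw [htr]
  rw [Complex.re_sum]
  rw [← Finset.sum_neg_distrib]
  apply Finset.sum_le_sum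
  intro i _
  have : ((star U * Q * U) i i * ((hH.eigenvalues i : ℝ) : ℂ)).re
      = ((star U * Q * U) i i).re * hH.eigenvalues i := by
    simp [Complex.mul_re]
  rw [this]
  have h1 : 0 ≤ max 0 (-(hH.eigenvalues i)) := le_max_left _ _
  have h2 : -(hH.eigenvalues i) ≤ max 0 (-(hH.eigenvalues i)) := le_max_right _ _
  nlinarith [hq0 i, hq1 i]


lemma exists_proj {n : Type*} [Fintype n] [DecidableEq n]
    {M : Matrix n n ℂ} (hM : M.IsHermitian) :
    ∃ P : Matrix n n ℂ, P.PosSemidef ∧ ((1 : Matrix n n ℂ) - P).PosSemidef ∧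
      ∑ i, max 0 (-(hM.eigenvalues i)) = -((P * M).trace.re) := by
  classical
  set V : Matrix n n ℂ := (hM.eigenvectorUnitary : Matrix n n ℂ) with hVdef
  have hV1 : star V * V = 1 := (hM.eigenvectorUnitary).2.1
  have hV2 : V * star V = 1 := (hM.eigenvectorUnitary).2.2
  set χ : n → ℂ := fun i => if hM.eigenvalues i < 0 then 1 else 0 with hχ
  have hχ01 : ∀ i, 0 ≤ χ i := by
    intro i; by_cases h : hM.eigenvalues i < 0 <;> simp [hχ, h]
  have hχ01' : ∀ i, 0 ≤ 1 - χ i := by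
    intro i; by_cases h : hM.eigenvalues i < 0 <;> simp [hχ, h]
  refine ⟨V * diagonal χ * star V, ?_, ?_, ?_⟩
  · have : (diagonal χ).PosSemidef := PosSemidef.diagonal (fun i => hχ01 i)
    simpa [star_eq_conjTranspose] using this.mul_mul_conjTranspose_same V
  · have h1 : (1 : Matrix n n ℂ) - V * diagonal χ * star V
        = V * diagonal (fun i => 1 - χ i) * star V := by
      have : diagonal (fun i => (1 : ℂ) - χ i) = 1 - diagonal χ := by
        rw [← diagonal_one, diagonal_sub]
      rw [this, mul_sub, sub_mul, mul_one, hV2]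
    rw [h1]
    have : (diagonal (fun i => 1 - χ i)).PosSemidef :=
      PosSemidef.diagonal (fun i => hχ01' i)
    simpa [star_eq_conjTranspose] using this.mul_mul_conjTranspose_same V
  · have htr : (V * diagonal χ * star V * M).trace
        = ∑ i, χ i * ((hM.eigenvalues i : ℝ) : ℂ) := by
      conv_lhs => rw [hM.spectral_theorem, Unitary.conjStarAlgAut_apply]
      rw [show V * diagonal χ * star V * (V * diagonal (RCLike.ofReal ∘ hM.eigenvalues) * star V)
          = V * (diagonal χ * (star V * V) * diagonal (RCLike.ofReal ∘ hM.eigenvalues)) * star V by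
        simp only [mul_assoc]]
      rw [hV1, mul_one, diagonal_mul_diagonal, trace_mul_comm,
        show star V * (V * diagonal fun i => χ i * (RCLike.ofReal ∘ hM.eigenvalues) i)
          = (star V * V) * diagonal fun i => χ i * (RCLike.ofReal ∘ hM.eigenvalues) i by
        simp only [mul_assoc], hV1, one_mul, trace_diagonal]
      simp [Function.comp]
    rw [htr, Complex.re_sum, ← Finset.sum_neg_distrib]
    apply Finset.sum_congr rfl
    intro i _
    by_cases h : hM.eigenvalues i < 0
    · simp [hχ, h, Complex.mul_re]
      exact le_of_lt h
    · simp [hχ, h, Complex.mul_re]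
      exact not_lt.mp h
variable {α β γ : Type*} [Fintype α] [Fintype β] [Fintype γ]
  [DecidableEq α] [DecidableEq β] [DecidableEq γ]

def liftQ (P : Matrix (α × β) (α × β) ℂ) : Matrix (α × β × γ) (α × β × γ) ℂ :=
  Matrix.of fun p q => P (p.1, p.2.1) (q.1, q.2.1) * (if p.2.2 = q.2.2 then 1 else 0)

lemma liftQ_one : (liftQ (1 : Matrix (α × β) (α × β) ℂ) : Matrix (α × β × γ) (α × β × γ) ℂ) = 1 := by
  ext ⟨a, b, c⟩ ⟨a', b', c'⟩
  simp [liftQ, Matrix.one_apply, Prod.ext_iff]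
  by_cases h1 : a = a' <;> by_cases h2 : b = b' <;> by_cases h3 : c = c' <;> simp [h1, h2, h3]

lemma liftQ_sub (P P' : Matrix (α × β) (α × β) ℂ) :
    (liftQ (P - P') : Matrix (α × β × γ) (α × β × γ) ℂ) = liftQ P - liftQ P' := by
  ext p q
  simp only [liftQ, of_apply, Matrix.sub_apply, sub_mul, mul_ite, mul_one, mul_zero]
  split <;> simp

lemma liftQ_posSemidef {P : Matrix (α × β) (α × β) ℂ} (hP : P.PosSemidef) :
    (liftQ P : Matrix (α × β × γ) (α × β × γ) ℂ).PosSemidef := by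
  refine PosSemidef.of_dotProduct_mulVec_nonneg ?_ ?_
  · ext p q
    have h := congrFun (congrFun hP.1 (p.1, p.2.1)) (q.1, q.2.1)
    simp only [conjTranspose_apply] at h ⊢
    simp only [liftQ, of_apply]
    rcases eq_or_ne p.2.2 q.2.2 with h3 | h3
    · simp [h3, h]
    · simp [h3, h3.symm]
  · intro x
    have key : star x ⬝ᵥ (liftQ P : Matrix (α × β × γ) (α × β × γ) ℂ) *ᵥ x
        = ∑ c : γ, star (fun ab : α × β => x (ab.1, ab.2, c)) ⬝ᵥ
            P *ᵥ (fun ab : α × β => x (ab.1, ab.2, c)) := by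
      have hmv : ∀ p : α × β × γ, ((liftQ P : Matrix (α × β × γ) (α × β × γ) ℂ) *ᵥ x) p
          = ∑ ab : α × β, P (p.1, p.2.1) ab * x (ab.1, ab.2, p.2.2) := by
        intro p
        simp only [mulVec, dotProduct, liftQ, of_apply, Fintype.sum_prod_type]
        rw [Finset.sum_congr rfl]
        intro a' _
        rw [Finset.sum_congr rfl]
        intro b' _
        simp [mul_ite, ite_mul, Finset.sum_ite_eq]
      have key2 : ∀ c : γ, star (fun ab : α × β => x (ab.1, ab.2, c)) ⬝ᵥ
          P *ᵥ (fun ab : α × β => x (ab.1, ab.2, c))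
          = ∑ ab : α × β, star (x (ab.1, ab.2, c)) *
              ∑ ab' : α × β, P ab ab' * x (ab'.1, ab'.2, c) := by
        intro c
        simp only [dotProduct, Pi.star_apply, mulVec]
      simp only [key2]
      have hL : star x ⬝ᵥ (liftQ P : Matrix (α × β × γ) (α × β × γ) ℂ) *ᵥ x
          = ∑ q : (α × β) × γ, star (x (q.1.1, q.1.2, q.2)) *
              ∑ ab' : α × β, P q.1 ab' * x (ab'.1, ab'.2, q.2) := by
        rw [dotProduct]
        refine (Fintype.sum_equiv (Equiv.prodAssoc α β γ) _ _ ?_).symm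
        intro q
        simp only [Equiv.prodAssoc, Equiv.coe_fn_mk, Pi.star_apply, hmv]
      rw [hL, Fintype.sum_prod_type, Finset.sum_comm]
    rw [key]
    exact Finset.sum_nonneg fun c _ => hP.dotProduct_mulVec_nonneg _
lemma trace_liftQ_mul (P : Matrix (α × β) (α × β) ℂ)
    (H : Matrix (α × β × γ) (α × β × γ) ℂ) :
    ((liftQ P : Matrix (α × β × γ) (α × β × γ) ℂ) * H).trace = (P * ptraceC3 H).trace := by
  simp only [trace, diag, mul_apply, liftQ, of_apply, ptraceC3, Fintype.sum_prod_type,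
    ite_mul, one_mul, zero_mul, Finset.mul_sum]
  rw [Finset.sum_congr rfl]; intro a _
  rw [Finset.sum_congr rfl]; intro b _
  rw [Finset.sum_comm]
  rw [Finset.sum_congr rfl]; intro a' _
  rw [Finset.sum_comm]
  rw [Finset.sum_congr rfl]; intro b' _
  rw [Finset.sum_comm]
  simp [Finset.sum_ite_eq]

lemma ptB_ptraceC3 (ρ : Matrix (α × β × γ) (α × β × γ) ℂ) :
    ptB (ptraceC3 ρ) = ptraceC3 (ptB ρ) := by
  ext p q
  simp [ptB, ptraceC3]

lemma ptB_isHermitian {ρ : Matrix (α × β) (α × β) ℂ} (h : ρ.IsHermitian) :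
    (ptB ρ).IsHermitian := by
  ext p q
  have hh := congrFun (congrFun h (p.1, q.2)) (q.1, p.2)
  simp only [conjTranspose_apply] at hh ⊢
  simp only [ptB, of_apply]
  exact hh

lemma ptraceC3_isHermitian {ρ : Matrix (α × β × γ) (α × β × γ) ℂ} (h : ρ.IsHermitian) :
    (ptraceC3 ρ).IsHermitian := by
  ext p q
  simp only [conjTranspose_apply, ptraceC3, of_apply, star_sum]
  rw [Finset.sum_congr rfl]
  intro k _
  have hh := congrFun (congrFun h (p.1, p.2, k)) (q.1, q.2, k)
  simpa [conjTranspose_apply] using hh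

end NegHelpers

/-- negativity does not increase when subsystem `C` is discarded:
`N_{A:B}(tr_C ρ) ≤ N_{A:BC}(ρ)`. -/
theorem negativity_ptrace_le (dA dB dC : ℕ)
    (ρ : Matrix (Fin dA × Fin dB × Fin dC) (Fin dA × Fin dB × Fin dC) ℂ)
    (hρ : IsDensityMatrix ρ) :
    negativity (ptraceC3 ρ) ≤ negativity ρ := by
  classical
  have hH : (ptB ρ).IsHermitian := ptB_isHermitian hρ.1.1
  have hcomm : ptB (ptraceC3 ρ) = ptraceC3 (ptB ρ) := ptB_ptraceC3 ρ
  have hM : (ptB (ptraceC3 ρ)).IsHermitian := by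
    rw [hcomm]; exact ptraceC3_isHermitian hH
  rw [negativity, dif_pos hM, negativity, dif_pos hH]
  obtain ⟨P, hP, hP1, hPeq⟩ := exists_proj hM
  have hQ : (liftQ P : Matrix (Fin dA × Fin dB × Fin dC) _ ℂ).PosSemidef :=
    liftQ_posSemidef hP
  have hQ1 : ((1 : Matrix (Fin dA × Fin dB × Fin dC) _ ℂ) - liftQ P).PosSemidef := by
    rw [← liftQ_one, ← liftQ_sub]; exact liftQ_posSemidef hP1
  have htr : ((liftQ P : Matrix (Fin dA × Fin dB × Fin dC) _ ℂ) * ptB ρ).trace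
      = (P * ptB (ptraceC3 ρ)).trace := by
    rw [trace_liftQ_mul, hcomm]
  calc ∑ i, max 0 (-hM.eigenvalues i)
      = -((P * ptB (ptraceC3 ρ)).trace.re) := hPeq
    _ = -(((liftQ P : Matrix (Fin dA × Fin dB × Fin dC) _ ℂ) * ptB ρ).trace.re) := by
        rw [htr]
    _ ≤ ∑ i, max 0 (-hH.eigenvalues i) := neg_trace_le hH hQ hQ1


end
end

section
/- Let X, Y denote the Pauli matrices X = |0⟩⟨1| + |1⟩⟨0| and Y = −i|0⟩⟨1| + i|1⟩⟨0| on ℂ², and define M = (X ⊗ I ⊗ Y + I ⊗ Y ⊗ X)/√2 on ℂ² ⊗ ℂ² ⊗ ℂ². Then for every real t, exp(−itM)(e₀ ⊗ e₀ ⊗ e₀) = cos t · (e₀ ⊗ e₀ ⊗ e₀) + sin t · ((e₀ ⊗ e₁ + e₁ ⊗ e₀)/√2) ⊗ e₁. In particular, the first two qubits reach the maximally entangled Bell state (e₀⊗e₁ + e₁⊗e₀)/√2 only at t = π/2, twice the direct-interaction time arccos(1/√2) = π/4. -/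
open scoped Matrix Kronecker ComplexOrder

noncomputable section

/-- Standard basis vector `e₀` of `ℂ²`. -/
def qe0 : Fin 2 → ℂ := ![1, 0]

/-- Standard basis vector `e₁` of `ℂ²`. -/
def qe1 : Fin 2 → ℂ := ![0, 1]

/-- Pauli `X` matrix. -/
def pX : Matrix (Fin 2) (Fin 2) ℂ := !![0, 1; 1, 0]

/-- Pauli `Y` matrix. -/
def pY : Matrix (Fin 2) (Fin 2) ℂ := !![0, -Complex.I; Complex.I, 0]

/-- Pauli `Z` matrix. -/
def pZ : Matrix (Fin 2) (Fin 2) ℂ := !![1, 0; 0, -1]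

/-- The Hamiltonian `M = (X ⊗ I ⊗ Y + I ⊗ Y ⊗ X)/√2`. -/
def Mxy : Matrix ((Fin 2 × Fin 2) × Fin 2) ((Fin 2 × Fin 2) × Fin 2) ℂ :=
  (((Real.sqrt 2 : ℝ) : ℂ))⁻¹ •
    ((pX ⊗ₖ (1 : Matrix (Fin 2) (Fin 2) ℂ)) ⊗ₖ pY +
      ((1 : Matrix (Fin 2) (Fin 2) ℂ) ⊗ₖ pY) ⊗ₖ pX)


/-- Auxiliary: the initial state `|000⟩`. -/
def mdxyV : (Fin 2 × Fin 2) × Fin 2 → ℂ := tensorVec (tensorVec qe0 qe0) qe0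

/-- Auxiliary: the target state `|ψ⁺⟩|1⟩`. -/
def mdxyW : (Fin 2 × Fin 2) × Fin 2 → ℂ :=
  tensorVec ((((Real.sqrt 2 : ℝ) : ℂ))⁻¹ • (tensorVec qe0 qe1 + tensorVec qe1 qe0)) qe1

lemma mdxy_Mv : Mxy *ᵥ mdxyV = Complex.I • mdxyW := by
  funext p
  obtain ⟨⟨a, b⟩, c⟩ := p
  fin_cases a <;> fin_cases b <;> fin_cases c <;>
    simp [Mxy, mdxyV, mdxyW, Matrix.mulVec, dotProduct, Fintype.sum_prod_type,
      Fin.sum_univ_two, Matrix.kroneckerMap_apply, pX, pY, qe0, qe1, tensorVec,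
      Matrix.one_apply] <;> ring

lemma mdxy_Mw : Mxy *ᵥ mdxyW = (-Complex.I) • mdxyV := by
  funext p
  obtain ⟨⟨a, b⟩, c⟩ := p
  have h2 : ((Real.sqrt 2 : ℝ) : ℂ) * ((Real.sqrt 2 : ℝ) : ℂ) = 2 := by
    rw [← Complex.ofReal_mul, Real.mul_self_sqrt (by norm_num : (0:ℝ) ≤ 2)]; norm_num
  have hne : ((Real.sqrt 2 : ℝ) : ℂ) ≠ 0 :=
    Complex.ofReal_ne_zero.mpr (by positivity)
  have hsq : ((Real.sqrt 2 : ℝ) : ℂ) ^ 2 = 2 := by rw [sq]; exact h2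
  have hsq4 : ((Real.sqrt 2 : ℝ) : ℂ) ^ 4 = 4 := by
    have : (4:ℕ) = 2*2 := rfl
    rw [this, pow_mul, hsq]; norm_num
  fin_cases a <;> fin_cases b <;> fin_cases c <;>
    simp [Mxy, mdxyV, mdxyW, Matrix.mulVec, dotProduct, Fintype.sum_prod_type,
      Fin.sum_univ_two, Matrix.kroneckerMap_apply, pX, pY, qe0, qe1, tensorVec,
      Matrix.one_apply] <;> field_simp <;> ring_nf <;>
    simp [Complex.I_sq, hsq, hsq4] <;> ring_nf

lemma mdxy_hasSum_exp_mulVec {m : Type*} [Fintype m] [DecidableEq m]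
    (A : Matrix m m ℂ) (v : m → ℂ) :
    HasSum (fun n : ℕ => ((n.factorial : ℂ))⁻¹ • (A ^ n *ᵥ v))
      (NormedSpace.exp A *ᵥ v) := by
  letI : SeminormedRing (Matrix m m ℂ) := Matrix.linftyOpSemiNormedRing
  letI : NormedRing (Matrix m m ℂ) := Matrix.linftyOpNormedRing
  letI : NormedAlgebra ℂ (Matrix m m ℂ) := Matrix.linftyOpNormedAlgebra
  have h : HasSum (fun n : ℕ => ((n.factorial : ℂ))⁻¹ • A ^ n) (NormedSpace.exp A) := by
    rw [NormedSpace.exp_eq_tsum ℂ]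
    exact (NormedSpace.expSeries_summable' (𝕂 := ℂ) A).hasSum
  let L : Matrix m m ℂ →ₗ[ℂ] (m → ℂ) :=
    { toFun := fun B => B *ᵥ v
      map_add' := fun B C => Matrix.add_mulVec B C v
      map_smul' := fun c B => Matrix.smul_mulVec c B v }
  have hL : Continuous L := L.continuous_of_finiteDimensional
  have h2 := h.map L.toAddMonoidHom hL
  have h3 : (⇑L.toAddMonoidHom ∘ fun n : ℕ => ((n.factorial : ℂ))⁻¹ • A ^ n) =
      fun n : ℕ => ((n.factorial : ℂ))⁻¹ • (A ^ n *ᵥ v) := by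
    funext n
    simp [L, Function.comp, Matrix.smul_mulVec]
  rw [h3] at h2
  exact h2

lemma mdxy_pow_mulVec {m : Type*} [Fintype m] [DecidableEq m]
    (A : Matrix m m ℂ) (v w : m → ℂ) (c d : ℂ)
    (hv : A *ᵥ v = c • w) (hw : A *ᵥ w = d • v) (k : ℕ) :
    A ^ (2 * k) *ᵥ v = ((c * d) ^ k) • v ∧
      A ^ (2 * k + 1) *ᵥ v = ((c * d) ^ k * c) • w := by
  induction k with
  | zero => simp [pow_one, hv]
  | succ k ih =>
    obtain ⟨ih1, ih2⟩ := ih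
    have step : ∀ (n : ℕ) (x : m → ℂ), A ^ (n + 1) *ᵥ x = A *ᵥ (A ^ n *ᵥ x) := by
      intro n x
      rw [Matrix.mulVec_mulVec, ← pow_succ']
    constructor
    · have e : 2 * (k + 1) = (2 * k + 1) + 1 := by ring
      rw [e, step, ih2, Matrix.mulVec_smul, hw, smul_smul]
      rw [pow_succ]
      ring_nf
    · have e : 2 * (k + 1) + 1 = (2 * (k + 1)) + 1 := rfl
      have e2 : 2 * (k + 1) = (2 * k + 1) + 1 := by ring
      rw [e2, step, step, ih2, Matrix.mulVec_smul, hw, Matrix.mulVec_smul, Matrix.mulVec_smul,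
        hv, smul_smul, smul_smul, pow_succ]
      ring_nf

lemma mdxy_main (t : ℝ) :
    NormedSpace.exp ((-(Complex.I * (t : ℂ))) • Mxy) *ᵥ mdxyV =
      ((Real.cos t : ℝ) : ℂ) • mdxyV + ((Real.sin t : ℝ) : ℂ) • mdxyW := by
  set A : Matrix ((Fin 2 × Fin 2) × Fin 2) ((Fin 2 × Fin 2) × Fin 2) ℂ :=
    (-(Complex.I * (t : ℂ))) • Mxy with hA
  have hAv : A *ᵥ mdxyV = (t : ℂ) • mdxyW := by
    rw [hA, Matrix.smul_mulVec, mdxy_Mv, smul_smul]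
    congr 1
    linear_combination (-(t : ℂ)) * Complex.I_sq
  have hAw : A *ᵥ mdxyW = (-(t : ℂ)) • mdxyV := by
    rw [hA, Matrix.smul_mulVec, mdxy_Mw, smul_smul]
    congr 1
    linear_combination (t : ℂ) * Complex.I_sq
  have hpow := mdxy_pow_mulVec A mdxyV mdxyW (t : ℂ) (-(t : ℂ)) hAv hAw
  have hs1 := mdxy_hasSum_exp_mulVec A mdxyV
  have hcos := (Complex.hasSum_cos (t : ℂ)).smul_const mdxyV
  have hsin := (Complex.hasSum_sin (t : ℂ)).smul_const mdxyW
  have hs2 : HasSum (fun n : ℕ => ((n.factorial : ℂ))⁻¹ • (A ^ n *ᵥ mdxyV))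
      (Complex.cos (t : ℂ) • mdxyV + Complex.sin (t : ℂ) • mdxyW) := by
    refine HasSum.even_add_odd ?_ ?_
    · convert hcos using 2 with k
      rw [(hpow k).1, smul_smul]
      congr 1
      have : ((t : ℂ) * -(t : ℂ)) ^ k = (-1) ^ k * (t : ℂ) ^ (2 * k) := by
        rw [show (t : ℂ) * -(t : ℂ) = -1 * (t : ℂ) ^ 2 by ring, mul_pow, ← pow_mul]
      rw [this]
      field_simp
    · convert hsin using 2 with k
      rw [(hpow k).2, smul_smul]
      congr 1
      have : ((t : ℂ) * -(t : ℂ)) ^ k = (-1) ^ k * (t : ℂ) ^ (2 * k) := by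
        rw [show (t : ℂ) * -(t : ℂ) = -1 * (t : ℂ) ^ 2 by ring, mul_pow, ← pow_mul]
      rw [this]
      field_simp
      try ring
  have := hs1.unique hs2
  rw [this, Complex.ofReal_cos, Complex.ofReal_sin]

/-- the mediated dynamics generated by `M` on `|000⟩` produces
`cos t |000⟩ + sin t |ψ⁺⟩|1⟩`, so the Bell state is reached only at `t = π/2`,
twice the direct-interaction time `arccos(1/√2) = π/4`. -/
theorem mediated_dynamics_xy :
    (∀ t : ℝ,
      NormedSpace.exp ((-(Complex.I * (t : ℂ))) • Mxy) *ᵥ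
          tensorVec (tensorVec qe0 qe0) qe0 =
        ((Real.cos t : ℝ) : ℂ) • tensorVec (tensorVec qe0 qe0) qe0 +
          ((Real.sin t : ℝ) : ℂ) •
            tensorVec ((((Real.sqrt 2 : ℝ) : ℂ))⁻¹ •
              (tensorVec qe0 qe1 + tensorVec qe1 qe0)) qe1) ∧
    NormedSpace.exp ((-(Complex.I * ((Real.pi / 2 : ℝ) : ℂ))) • Mxy) *ᵥ
        tensorVec (tensorVec qe0 qe0) qe0 =
      tensorVec ((((Real.sqrt 2 : ℝ) : ℂ))⁻¹ • (tensorVec qe0 qe1 + tensorVec qe1 qe0)) qe1 ∧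
    Real.arccos (Real.sqrt 2)⁻¹ = Real.pi / 4 := by
  refine ⟨fun t => mdxy_main t, ?_, ?_⟩
  · have h := mdxy_main (Real.pi / 2)
    simp only [mdxyV, mdxyW] at h
    rw [h]
    simp [Real.cos_pi_div_two, Real.sin_pi_div_two]
  · have h4 : (Real.sqrt 2)⁻¹ = Real.cos (Real.pi / 4) := by
      rw [Real.cos_pi_div_four]
      have h2 : Real.sqrt 2 * Real.sqrt 2 = 2 := Real.mul_self_sqrt (by norm_num)
      have hne : Real.sqrt 2 ≠ 0 := by positivity
      field_simp
      rw [sq, h2]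
    rw [h4, Real.arccos_cos (by positivity) (by linarith [Real.pi_pos])]


end
end
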